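/- Let R ≤ A(M)^m be a computational subpower with D-part 𝒟(R) = { i : R(i) ∩ D ≠ ∅ } nonempty, and suppose every index i ∈ [m] lies in both 𝒟(R) and ℋ(R) = { i : R(≠i) is halting }. Then there exist vectors (σ_i)_{i∈[m]} in R with σ_i(i) = ⟨1,·⟩ and σ_i(j) = ⟨1,0⟩ for j ≠ i; in particular R has capacity m−1. -/
import Mathlib


namespace AMPaper

inductive Cnt
  | dot | times | zero | A | B
deriving DecidableEq

inductive Reg
  | A | B
deriving DecidableEq

/-- A Minsky machine instruction for a machine with states `{0,…,N}`:
`inc R j` is `(i,R,j)` and `dec R k j` is `(i,R,k,j)`. -/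
inductive Instr (N : ℕ)
  | inc : Reg → Fin (N + 1) → Instr N
  | dec : Reg → Fin (N + 1) → Fin (N + 1) → Instr N

/-- A Minsky machine with states `{0,…,N}` and exactly one instruction per state. -/
structure Minsky (N : ℕ) where
  instr : Fin (N + 1) → Instr N

/-- Elements of the universe `A(M)`: pairs `⟨i,c⟩` of a state and a content. -/
abbrev El (N : ℕ) := Fin (N + 1) × Cnt

/-- The content corresponding to a register. -/
def regCnt : Reg → Cnt
  | .A => Cnt.A
  | .B => Cnt.B

/-- The helper function `X(⟨i,c⟩) = ⟨i,×⟩`. -/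
def Xf {N : ℕ} (x : El N) : El N := (x.1, Cnt.times)

/-- The semilattice meet. -/
def meet {N : ℕ} (x y : El N) : El N :=
  if x = y then x else (min x.1 y.1, Cnt.times)

/-- The order induced by the meet: `x ≤ y` iff `x ∧ y = x`. -/
def elLe {N : ℕ} (x y : El N) : Prop := meet x y = x

/-- The operation `M(x,y)` of `A(M)`. -/
def Mop {N : ℕ} (m : Minsky N) (x y : El N) : El N :=
  if x.1 = y.1 then
    match m.instr x.1 with
    | .inc R j =>
        if x.2 = Cnt.dot ∧ y.2 = Cnt.zero then (j, regCnt R)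
        else if x.2 = Cnt.zero ∧ y.2 = Cnt.dot then (j, Cnt.dot)
        else if x = y ∧ x.2 ≠ Cnt.dot then (j, x.2)
        else (j, Cnt.times)
    | .dec R _ j =>
        if x.2 = Cnt.dot ∧ y.2 = regCnt R then (j, Cnt.zero)
        else if x.2 = regCnt R ∧ y.2 = Cnt.dot then (j, Cnt.dot)
        else if x = y ∧ x.2 ≠ Cnt.dot then (j, x.2)
        else (j, Cnt.times)
  else Xf y

/-- The operation `M'(x)` of `A(M)`. -/
def M'op {N : ℕ} (m : Minsky N) (x : El N) : El N :=
  match m.instr x.1 with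
  | .dec R k _ => if x.2 = regCnt R then (k, Cnt.times) else (k, x.2)
  | .inc _ _ => Xf x

/-- The operation `I(x,y)` of `A(M)`. -/
def Iop {N : ℕ} (x y : El N) : El N :=
  if x.2 = Cnt.dot then ((1 : Fin (N + 1)), Cnt.dot)
  else if y.2 = Cnt.zero ∨ y.2 = Cnt.A ∨ y.2 = Cnt.B then ((1 : Fin (N + 1)), Cnt.zero)
  else ((1 : Fin (N + 1)), Cnt.times)

/-- The operation `H(x)` of `A(M)`. -/
def Hop {N : ℕ} (x : El N) : El N :=
  if x = ((0 : Fin (N + 1)), Cnt.zero) ∨ x = ((0 : Fin (N + 1)), Cnt.dot)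
  then ((0 : Fin (N + 1)), Cnt.zero)
  else ((0 : Fin (N + 1)), Cnt.times)

/-- The operation `N₀(x,y,z)` of `A(M)`. -/
def N0op {N : ℕ} (x y z : El N) : El N :=
  if x = ((0 : Fin (N + 1)), Cnt.dot) ∧ y.1 = z.1 then y
  else if x = ((0 : Fin (N + 1)), Cnt.zero) ∧ z.2 ≠ Cnt.dot ∧ y.1 = z.1 then z
  else Xf (meet y z)

/-- The operation `S(x,y,z)` of `A(M)`. -/
def Sop {N : ℕ} (x y z : El N) : El N :=
  if x = ((1 : Fin (N + 1)), Cnt.zero) ∧ y.1 = (1 : Fin (N + 1)) ∧ z.1 = (1 : Fin (N + 1)) ∧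
      ((y.2 = Cnt.dot ∧ z.2 = Cnt.zero) ∨ (y.2 = Cnt.zero ∧ z.2 = Cnt.dot) ∨
        (y.2 = Cnt.zero ∧ z.2 = Cnt.zero))
  then ((1 : Fin (N + 1)), Cnt.zero)
  else ((1 : Fin (N + 1)), Cnt.times)

/-- The operation `N·(u,x,y,z)` of `A(M)`. -/
def Ndotop {N : ℕ} (u x y z : El N) : El N :=
  if x = y ∧ x.2 ≠ Cnt.times ∧ x.1 = z.1 then x
  else if u.2 = Cnt.dot ∧ y.2 = Cnt.times ∧ x.1 = y.1 ∧ y.1 = z.1 then x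
  else if u.2 = Cnt.dot ∧ x.2 = Cnt.times ∧ x.1 = y.1 ∧ y.1 = z.1 then y
  else if u.2 = Cnt.dot ∧ (z = x ∨ z = y) ∧ x.1 = y.1 ∧ y.1 = z.1 then z
  else Xf (meet x (meet y z))

/-- The operation `P(u,v,x,y)` of `A(M)`. -/
def Pop {N : ℕ} (u v x y : El N) : El N :=
  if u.1 = v.1 then x else y

/-- A subset `R ⊆ A(M)^ι` is a subpower if it is closed under all nine
fundamental operations of `A(M)` applied coordinatewise. -/
def IsSubpower {N : ℕ} (m : Minsky N) {ι : Type} (R : Set (ι → El N)) : Prop :=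
  (∀ a ∈ R, ∀ b ∈ R, (fun i => meet (a i) (b i)) ∈ R) ∧
  (∀ a ∈ R, ∀ b ∈ R, (fun i => Mop m (a i) (b i)) ∈ R) ∧
  (∀ a ∈ R, (fun i => M'op m (a i)) ∈ R) ∧
  (∀ a ∈ R, ∀ b ∈ R, (fun i => Iop (a i) (b i)) ∈ R) ∧
  (∀ a ∈ R, (fun i => Hop (a i)) ∈ R) ∧
  (∀ a ∈ R, ∀ b ∈ R, ∀ c ∈ R, (fun i => N0op (a i) (b i) (c i)) ∈ R) ∧
  (∀ a ∈ R, ∀ b ∈ R, ∀ c ∈ R, (fun i => Sop (a i) (b i) (c i)) ∈ R) ∧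
  (∀ u ∈ R, ∀ a ∈ R, ∀ b ∈ R, ∀ c ∈ R, (fun i => Ndotop (u i) (a i) (b i) (c i)) ∈ R) ∧
  (∀ u ∈ R, ∀ v ∈ R, ∀ a ∈ R, ∀ b ∈ R, (fun i => Pop (u i) (v i) (a i) (b i)) ∈ R)

/-- A tuple is synchronized if its state is constant across coordinates. -/
def Sync {N : ℕ} {ι : Type} (r : ι → El N) : Prop :=
  ∀ i j : ι, (r i).1 = (r j).1

/-- The subpower of `A(M)^ι` generated by a set `G`. -/
def Sg {N : ℕ} (m : Minsky N) {ι : Type} (G : Set (ι → El N)) : Set (ι → El N) :=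
  {x | ∀ R : Set (ι → El N), IsSubpower m R → G ⊆ R → x ∈ R}

/-- `R` is computational: synchronized and every element has at most one
coordinate with content `·`. -/
def Computational {N : ℕ} {m : ℕ} (R : Set (Fin m → El N)) : Prop :=
  (∀ r ∈ R, Sync r) ∧
  ∀ r ∈ R, ∀ i j : Fin m, (r i).2 = Cnt.dot → (r j).2 = Cnt.dot → i = j

/-- The dot part `𝒟(R)`. -/
def Dpart {N : ℕ} {m : ℕ} (R : Set (Fin m → El N)) : Set (Fin m) :=
  {i | ∃ r ∈ R, (r i).2 = Cnt.dot}

/-- `i ∈ ℋ(R)` iff the projection `R(≠ i)` is halting, i.e. some `r ∈ R` has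
all coordinates other than `i` in `{⟨0,0⟩, ⟨0,·⟩}` with at least one `⟨0,·⟩`. -/
def Hpart {N : ℕ} {m : ℕ} (R : Set (Fin m → El N)) : Set (Fin m) :=
  {i | ∃ r ∈ R,
    (∀ j, j ≠ i → r j = ((0 : Fin (N + 1)), Cnt.zero) ∨
      r j = ((0 : Fin (N + 1)), Cnt.dot)) ∧
    ∃ j, j ≠ i ∧ r j = ((0 : Fin (N + 1)), Cnt.dot)}

/-- If `R ≤ A(M)^m` is a computational subpower with `𝒟(R)` nonempty and every
index lies in `𝒟(R) ∩ ℋ(R)`, then `R` contains vectors `σ_i` with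
`σ_i(i) = ⟨1,·⟩` and `σ_i(j) = ⟨1,0⟩` for `j ≠ i`; in particular `R` has
capacity `m − 1`. -/
theorem capacity_witnesses {N : ℕ} (mm : Minsky N) {m : ℕ}
    (R : Set (Fin m → El N)) (hsub : IsSubpower mm R)
    (hcomp : Computational R)
    (hDne : (Dpart R).Nonempty)
    (hall : ∀ i : Fin m, i ∈ Dpart R ∧ i ∈ Hpart R) :
    (∃ σ : Fin m → Fin m → El N, ∀ i : Fin m,
      σ i ∈ R ∧ σ i i = ((1 : Fin (N + 1)), Cnt.dot) ∧
      ∀ j, j ≠ i → σ i j = ((1 : Fin (N + 1)), Cnt.zero)) ∧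
    (Set.ncard {i : Fin m |
        ∃ r ∈ R, (∀ j, (r j).2 ≠ Cnt.times) ∧ (r i).2 = Cnt.dot})
      > m - 1 := by
  have hσ : ∀ i : Fin m, ∃ σi ∈ R, σi i = ((1 : Fin (N + 1)), Cnt.dot) ∧
      ∀ j, j ≠ i → σi j = ((1 : Fin (N + 1)), Cnt.zero) := by
    intro i
    obtain ⟨⟨s, hsR, hsi⟩, ⟨r, hrR, hrj, _⟩⟩ := hall i
    have hHr : (fun j => Hop (r j)) ∈ R := hsub.2.2.2.2.1 r hrR
    have hI : (fun j => Iop (s j) (Hop (r j))) ∈ R := hsub.2.2.2.1 s hsR _ hHr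
    refine ⟨_, hI, ?_, ?_⟩
    · simp [Iop, hsi]
    · intro j hj
      have hsj : (s j).2 ≠ Cnt.dot := fun h => hj (hcomp.2 s hsR j i h hsi)
      have hH : Hop (r j) = ((0 : Fin (N + 1)), Cnt.zero) := by
        rcases hrj j hj with h | h <;> simp [Hop, h]
      simp [Iop, hsj, hH]
  choose σ hσR hσi hσj using hσ
  refine ⟨⟨σ, fun i => ⟨hσR i, hσi i, hσj i⟩⟩, ?_⟩
  have hm : 0 < m := by
    obtain ⟨i, _⟩ := hDne; exact i.pos
  have huniv : {i : Fin m |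
      ∃ r ∈ R, (∀ j, (r j).2 ≠ Cnt.times) ∧ (r i).2 = Cnt.dot} = Set.univ := by
    ext i
    simp only [Set.mem_univ, iff_true, Set.mem_setOf_eq]
    refine ⟨σ i, hσR i, ?_, by rw [hσi i]⟩
    intro j
    by_cases h : j = i
    · subst h; rw [hσi j]; simp
    · rw [hσj i j h]; simp
  rw [huniv, Set.ncard_univ, Nat.card_eq_fintype_card, Fintype.card_fin]
  omega

end AMPaper
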